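/- Let Z₁(x), Z₁(x′) be jointly distributed square-integrable random variables and Z₂(x), Z₂(x′), δ₃(x) be such that Z₂(·) and δ₃(·) are independent of Z₁(·) and of each other. Define Z₃(x) = ρ₁(x)Z₁(x) + ρ₂(x)Z₂(x) + δ₃(x). Then the partial covariance of Z₃(x) and Z₁(x′) given (Z₁(x), Z₂(x)) is zero; that is, Cov(Z₃(x), Z₁(x′)) = [Cov(Z₃(x),Z₁(x)), Cov(Z₃(x),Z₂(x))] · diag(Var Z₁(x), Var Z₂(x))⁻¹ · [Cov(Z₁(x′),Z₁(x)), Cov(Z₁(x′),Z₂(x))]ᵀ. -/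

import Mathlib

open MeasureTheory ProbabilityTheory Matrix

/-- Covariance of two real random variables: `Cov(X,Y) = E[XY] - E[X]E[Y]`. -/
noncomputable def cov {Ω : Type*} [MeasurableSpace Ω] (μ : Measure Ω) (X Y : Ω → ℝ) : ℝ :=
  (∫ ω, X ω * Y ω ∂μ) - (∫ ω, X ω ∂μ) * (∫ ω, Y ω ∂μ)

/-- L² × L² products are integrable. -/
lemma l2mul {Ω : Type*} [MeasurableSpace Ω] {μ : Measure Ω} {f g : Ω → ℝ}
    (hf : MemLp f 2 μ) (hg : MemLp g 2 μ) :
    Integrable (fun ω => f ω * g ω) μ := by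
  have h := L2.integrable_inner (𝕜 := ℝ) (hf.toLp f) (hg.toLp g)
  refine h.congr ?_
  filter_upwards [hf.coeFn_toLp, hg.coeFn_toLp] with ω h1 h2
  simp [h1, h2, real_inner_comm, mul_comm]

/-- Covariance of independent integrable variables vanishes when one mean is zero. -/
lemma cov_indep_zero {Ω : Type*} [MeasurableSpace Ω] {μ : Measure Ω} {X Y : Ω → ℝ}
    (h : IndepFun X Y μ) (hX : Integrable X μ) (hY : Integrable Y μ)
    (hmX : ∫ ω, X ω ∂μ = 0) : cov μ X Y = 0 := by
  unfold cov
  have h2 : (∫ ω, X ω * Y ω ∂μ) = (∫ ω, X ω ∂μ) * ∫ ω, Y ω ∂μ :=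
    h.integral_fun_mul_eq_mul_integral hX.aestronglyMeasurable hY.aestronglyMeasurable
  rw [h2, hmX]
  ring

lemma cov_comm {Ω : Type*} [MeasurableSpace Ω] (μ : Measure Ω) (X Y : Ω → ℝ) :
    cov μ X Y = cov μ Y X := by
  unfold cov
  simp_rw [mul_comm (X _) (Y _)]
  ring

/-- Markov property (b) of the GMGP model for the 3-node in-tree.
With mean-zero square-integrable `Z₁x, Z₁x', Z₂x, δ₃x`, where `Z₂x` and `δ₃x` are
independent of `(Z₁x, Z₁x')` and of each other, and
`Z₃x = ρ₁ Z₁x + ρ₂ Z₂x + δ₃x`, the partial covariance of `Z₃(x)` and `Z₁(x')`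
given `(Z₁(x), Z₂(x))` is zero. -/
theorem stmt2 {Ω : Type*} [MeasurableSpace Ω] (μ : Measure Ω) [IsProbabilityMeasure μ]
    (Z₁x Z₁x' Z₂x δ₃x : Ω → ℝ) (ρ₁ ρ₂ : ℝ)
    (hZ₁x : MemLp Z₁x 2 μ) (hZ₁x' : MemLp Z₁x' 2 μ)
    (hZ₂x : MemLp Z₂x 2 μ) (hδ₃x : MemLp δ₃x 2 μ)
    (hm₁ : ∫ ω, Z₁x ω ∂μ = 0) (hm₁' : ∫ ω, Z₁x' ω ∂μ = 0)
    (hm₂ : ∫ ω, Z₂x ω ∂μ = 0) (hmδ : ∫ ω, δ₃x ω ∂μ = 0)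
    -- `Z₂` and `δ₃` are independent of the process `Z₁` (at both x and x') and of each other
    (h₂₁ : IndepFun Z₂x Z₁x μ) (h₂₁' : IndepFun Z₂x Z₁x' μ)
    (hδ₁ : IndepFun δ₃x Z₁x μ) (hδ₁' : IndepFun δ₃x Z₁x' μ)
    (hδ₂ : IndepFun δ₃x Z₂x μ)
    (hv₁ : 0 < cov μ Z₁x Z₁x) (hv₂ : 0 < cov μ Z₂x Z₂x)
    (Z₃x : Ω → ℝ) (hZ₃x : Z₃x = fun ω => ρ₁ * Z₁x ω + ρ₂ * Z₂x ω + δ₃x ω) :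
    cov μ Z₃x Z₁x' =
      ![cov μ Z₃x Z₁x, cov μ Z₃x Z₂x] ⬝ᵥ
        ((Matrix.diagonal ![cov μ Z₁x Z₁x, cov μ Z₂x Z₂x])⁻¹ *ᵥ
          ![cov μ Z₁x' Z₁x, cov μ Z₁x' Z₂x]) := by
  have i₁ := hZ₁x.integrable one_le_two
  have i₁' := hZ₁x'.integrable one_le_two
  have i₂ := hZ₂x.integrable one_le_two
  have iδ := hδ₃x.integrable one_le_two
  -- vanishing covariances by independence
  have c₂₁ : cov μ Z₂x Z₁x = 0 := cov_indep_zero h₂₁ i₂ i₁ hm₂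
  have c₂₁' : cov μ Z₂x Z₁x' = 0 := cov_indep_zero h₂₁' i₂ i₁' hm₂
  have cδ₁ : cov μ δ₃x Z₁x = 0 := cov_indep_zero hδ₁ iδ i₁ hmδ
  have cδ₁' : cov μ δ₃x Z₁x' = 0 := cov_indep_zero hδ₁' iδ i₁' hmδ
  have cδ₂ : cov μ δ₃x Z₂x = 0 := cov_indep_zero hδ₂ iδ i₂ hmδ
  -- expanding cov of Z₃x with any L² variable
  have hcov3 : ∀ W : Ω → ℝ, MemLp W 2 μ →
      cov μ Z₃x W = ρ₁ * cov μ Z₁x W + ρ₂ * cov μ Z₂x W + cov μ δ₃x W := by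
    intro W hW
    unfold cov
    subst hZ₃x
    have e1 : ∀ ω, (ρ₁ * Z₁x ω + ρ₂ * Z₂x ω + δ₃x ω) * W ω =
        ρ₁ * (Z₁x ω * W ω) + ρ₂ * (Z₂x ω * W ω) + δ₃x ω * W ω := fun ω => by ring
    simp_rw [e1]
    have ia : Integrable (fun ω => ρ₁ * (Z₁x ω * W ω) + ρ₂ * (Z₂x ω * W ω)) μ :=
      ((l2mul hZ₁x hW).const_mul ρ₁).add ((l2mul hZ₂x hW).const_mul ρ₂)
    have ib : Integrable (fun ω => ρ₁ * Z₁x ω + ρ₂ * Z₂x ω) μ :=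
      (i₁.const_mul ρ₁).add (i₂.const_mul ρ₂)
    rw [integral_add ia (l2mul hδ₃x hW),
      integral_add ((l2mul hZ₁x hW).const_mul ρ₁) ((l2mul hZ₂x hW).const_mul ρ₂),
      integral_const_mul, integral_const_mul,
      integral_add ib iδ,
      integral_add (i₁.const_mul ρ₁) (i₂.const_mul ρ₂),
      integral_const_mul, integral_const_mul, hm₁, hm₂, hmδ]
    ring
  have e31' : cov μ Z₃x Z₁x' = ρ₁ * cov μ Z₁x Z₁x' := by
    rw [hcov3 Z₁x' hZ₁x', c₂₁', cδ₁']; ring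
  have e31 : cov μ Z₃x Z₁x = ρ₁ * cov μ Z₁x Z₁x := by
    rw [hcov3 Z₁x hZ₁x, c₂₁, cδ₁]; ring
  have e32 : cov μ Z₃x Z₂x = ρ₂ * cov μ Z₂x Z₂x := by
    rw [hcov3 Z₂x hZ₂x, cov_comm μ Z₁x Z₂x, c₂₁, cδ₂]; ring
  have e1'1 : cov μ Z₁x' Z₁x = cov μ Z₁x Z₁x' := cov_comm μ Z₁x' Z₁x
  have e1'2 : cov μ Z₁x' Z₂x = 0 := by rw [cov_comm]; exact c₂₁'
  have hD : (Matrix.diagonal ![cov μ Z₁x Z₁x, cov μ Z₂x Z₂x])⁻¹ =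
      Matrix.diagonal ![(cov μ Z₁x Z₁x)⁻¹, (cov μ Z₂x Z₂x)⁻¹] := by
    apply Matrix.inv_eq_right_inv
    rw [Matrix.diagonal_mul_diagonal]
    ext i j
    fin_cases i <;> fin_cases j <;>
      simp [Matrix.diagonal, mul_inv_cancel₀ hv₁.ne', mul_inv_cancel₀ hv₂.ne', Matrix.one_apply]
  rw [e31', e31, e32, hD]
  simp only [dotProduct, Fin.sum_univ_two, Matrix.mulVec_diagonal,
    Matrix.cons_val_zero, Matrix.cons_val_one, Matrix.head_cons, e1'1, e1'2]
  field_simp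
  ring
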